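/- arXiv:1012.5012 — 2 statements merged into one kernel-verified Lean document; each statement's English description precedes it below -/
import Mathlib

section
/- For any real numbers a > 0, b > 0, and any positive integer r, one has a²/(2r) + b·r ≥ √(2b)·a. Consequently, for a sequence y with y_i outside the ε-neighborhood of Θ for n ≤ i ≤ m (with n < m), the functional piece Σ_{i=n}^{m-1} (½|Δy_i|² + A(1-cos y_i)) is at least √(2Aα_ε) · |y_m - y_n|, where α_ε = min_{t ∉ B_ε(Θ)} (1 - cos t). -/
open Real

/-- `α_ε = min_{t ∉ B_ε(Θ)} (1 - cos t)` where `Θ = {2kπ : k ∈ ℤ}`. -/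
noncomputable def alphaEps (ε : ℝ) : ℝ :=
  sInf ((fun t => 1 - Real.cos t) '' {t : ℝ | ∀ k : ℤ, ε ≤ |t - 2 * k * π|})

lemma telescope (y : ℤ → ℝ) (n : ℤ) : ∀ m : ℤ, n ≤ m →
    ∑ i ∈ Finset.Ico n m, (y (i + 1) - y i) = y m - y n := by
  refine Int.le_induction ?_ ?_
  · simp
  · intro m hm ih
    have hins : Finset.Ico n (m + 1) = insert m (Finset.Ico n m) := by
      ext x
      simp only [Finset.mem_Ico, Finset.mem_insert]
      omega
    rw [hins, Finset.sum_insert (by simp [Finset.mem_Ico]), ih]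
    ring

lemma amgm (a c : ℝ) (hc : 0 ≤ c) :
    Real.sqrt (2 * c) * |a| ≤ (1/2) * a ^ 2 + c := by
  have h1 : Real.sqrt (2 * c) ^ 2 = 2 * c := Real.sq_sqrt (by linarith)
  nlinarith [sq_nonneg (|a| - Real.sqrt (2 * c)), sq_abs a]

/-- For `a, b > 0` and a positive integer `r`, `a²/(2r) + b r ≥ √(2b) a`;
consequently, if `y_i ∉ B_ε(Θ)` for `n ≤ i ≤ m`, then
`Σ_{i=n}^{m-1} (½|Δy_i|² + A(1 - cos y_i)) ≥ √(2Aα_ε)|y_m - y_n|`. -/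
theorem lower_bound_outside_neighborhood (A ε : ℝ) (hA : 0 < A)
    (hε : 0 < ε) (hε' : ε < 2 * π / 3) :
    (∀ a b : ℝ, 0 < a → 0 < b → ∀ r : ℕ, 0 < r →
      Real.sqrt (2 * b) * a ≤ a ^ 2 / (2 * (r : ℝ)) + b * r) ∧
    (∀ (y : ℤ → ℝ) (n m : ℤ), n < m →
      (∀ i : ℤ, n ≤ i → i ≤ m → ∀ k : ℤ, ε ≤ |y i - 2 * k * π|) →
      Real.sqrt (2 * A * alphaEps ε) * |y m - y n| ≤
        ∑ i ∈ Finset.Ico n m,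
          ((1 / 2) * (y (i + 1) - y i) ^ 2 + A * (1 - Real.cos (y i)))) := by
  constructor
  · intro a b ha hb r hr
    have hr' : (0:ℝ) < r := by exact_mod_cast hr
    have hs : Real.sqrt (2 * b) ^ 2 = 2 * b := Real.sq_sqrt (by linarith)
    have key : 0 ≤ (a - Real.sqrt (2 * b) * r) ^ 2 := sq_nonneg _
    have h2 : 0 < 2 * (r:ℝ) := by linarith
    have expand : (a - Real.sqrt (2 * b) * r) ^ 2 =
        a ^ 2 - 2 * Real.sqrt (2 * b) * r * a + Real.sqrt (2 * b) ^ 2 * r ^ 2 := by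
      ring
    rw [hs] at expand
    rw [expand] at key
    rw [div_add' _ _ _ (ne_of_gt h2), le_div_iff₀ h2]
    nlinarith [key]
  · intro y n m hnm hy
    have hbdd : BddBelow ((fun t => 1 - Real.cos t) ''
        {t : ℝ | ∀ k : ℤ, ε ≤ |t - 2 * k * π|}) := by
      refine ⟨0, ?_⟩
      rintro x ⟨t, _, rfl⟩
      simp only
      nlinarith [Real.cos_le_one t]
    have halpha_le : ∀ i : ℤ, n ≤ i → i ≤ m → alphaEps ε ≤ 1 - Real.cos (y i) := by
      intro i h1 h2
      exact csInf_le hbdd ⟨y i, hy i h1 h2, rfl⟩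
    have halpha_nonneg : 0 ≤ alphaEps ε := by
      refine le_csInf ⟨1 - Real.cos (y n), ⟨y n, hy n le_rfl hnm.le, rfl⟩⟩ ?_
      rintro x ⟨t, _, rfl⟩
      simp only
      nlinarith [Real.cos_le_one t]
    have habs : |y m - y n| ≤ ∑ i ∈ Finset.Ico n m, |y (i + 1) - y i| := by
      rw [← telescope y n m hnm.le]
      exact Finset.abs_sum_le_sum_abs _ _
    have hsqrt_nonneg : 0 ≤ Real.sqrt (2 * A * alphaEps ε) := Real.sqrt_nonneg _
    have step : ∀ i ∈ Finset.Ico n m,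
        Real.sqrt (2 * A * alphaEps ε) * |y (i + 1) - y i| ≤
          (1 / 2) * (y (i + 1) - y i) ^ 2 + A * (1 - Real.cos (y i)) := by
      intro i hi
      rw [Finset.mem_Ico] at hi
      have hci : alphaEps ε ≤ 1 - Real.cos (y i) := halpha_le i hi.1 (by omega)
      have hc : 0 ≤ A * (1 - Real.cos (y i)) := by nlinarith [Real.cos_le_one (y i)]
      have h1 : Real.sqrt (2 * A * alphaEps ε) * |y (i + 1) - y i| ≤
          Real.sqrt (2 * (A * (1 - Real.cos (y i)))) * |y (i + 1) - y i| := by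
        apply mul_le_mul_of_nonneg_right _ (abs_nonneg _)
        apply Real.sqrt_le_sqrt
        nlinarith
      exact h1.trans (amgm _ _ hc)
    calc Real.sqrt (2 * A * alphaEps ε) * |y m - y n|
        ≤ Real.sqrt (2 * A * alphaEps ε) * ∑ i ∈ Finset.Ico n m, |y (i + 1) - y i| :=
          mul_le_mul_of_nonneg_left habs hsqrt_nonneg
      _ = ∑ i ∈ Finset.Ico n m, Real.sqrt (2 * A * alphaEps ε) * |y (i + 1) - y i| :=
          Finset.mul_sum _ _ _
      _ ≤ ∑ i ∈ Finset.Ico n m,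
          ((1 / 2) * (y (i + 1) - y i) ^ 2 + A * (1 - Real.cos (y i))) :=
          Finset.sum_le_sum step
end

section
/- For A > 0, if y is a solution of Δ²y_{n-1} = A sin(y_n) with finite action J(y) < ∞, then Δy_n → 0 as n → ±∞ and sin(y_{±∞}) = 0 where y_{±∞} are the limits of y_n (which exist and lie in Θ ⊂ {kπ : k ∈ ℤ}). -/
open Real Filter Topology

private lemma parts_aux (A : ℝ) (hA : 0 < A) (y : ℤ → ℝ) (l : Filter ℤ)
    (h : Tendsto (fun n : ℤ => (1 / 2) * (y (n + 1) - y n) ^ 2 + A * (1 - Real.cos (y n)))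
      l (nhds 0)) :
    Tendsto (fun n : ℤ => y (n + 1) - y n) l (nhds 0) ∧
    Tendsto (fun n : ℤ => Real.cos (y n)) l (nhds 1) := by
  have h1 : ∀ n : ℤ, 0 ≤ (1 / 2) * (y (n + 1) - y n) ^ 2 := fun n => by positivity
  have h2 : ∀ n : ℤ, 0 ≤ A * (1 - Real.cos (y n)) := fun n =>
    mul_nonneg hA.le (by linarith [Real.cos_le_one (y n)])
  have hq : Tendsto (fun n : ℤ => (1 / 2) * (y (n + 1) - y n) ^ 2) l (nhds 0) :=
    tendsto_of_tendsto_of_tendsto_of_le_of_le tendsto_const_nhds h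
      (fun n => h1 n) (fun n => le_add_of_nonneg_right (h2 n))
  have hc : Tendsto (fun n : ℤ => A * (1 - Real.cos (y n))) l (nhds 0) :=
    tendsto_of_tendsto_of_tendsto_of_le_of_le tendsto_const_nhds h
      (fun n => h2 n) (fun n => le_add_of_nonneg_left (h1 n))
  constructor
  · have hsq : Tendsto (fun n : ℤ => (y (n + 1) - y n) ^ 2) l (nhds 0) := by
      have := hq.const_mul 2
      simp only [mul_zero] at this
      refine this.congr fun n => by ring
    have habs : Tendsto (fun n : ℤ => |y (n + 1) - y n|) l (nhds 0) := by
      have := (Real.continuous_sqrt.tendsto 0).comp hsq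
      simp only [Function.comp_def, Real.sqrt_sq_eq_abs, Real.sqrt_zero] at this
      exact this
    rw [tendsto_zero_iff_abs_tendsto_zero]
    exact habs
  · have h3 : Tendsto (fun n : ℤ => 1 - Real.cos (y n)) l (nhds 0) := by
      have := hc.const_mul A⁻¹
      simp only [mul_zero] at this
      refine this.congr fun n => ?_
      field_simp
    have := (tendsto_const_nhds (α := ℤ) (f := l) (x := (1 : ℝ))).sub h3
    simp only [sub_zero] at this
    refine this.congr fun n => by ring

private lemma conv_aux (c : ℤ → ℝ)
    (hcos : Tendsto (fun n : ℤ => Real.cos (c n)) atTop (nhds 1))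
    (hd : Tendsto (fun n : ℤ => c (n + 1) - c n) atTop (nhds 0)) :
    ∃ k : ℤ, Tendsto c atTop (nhds (2 * k * π)) := by
  set k : ℤ → ℤ := fun n => round (c n / (2 * π)) with hk
  set g : ℤ → ℝ := fun n => c n - 2 * π * k n with hg
  have hπ : (0:ℝ) < 2 * π := by positivity
  have hgb : ∀ n, |g n| ≤ π := by
    intro n
    have h1 : |c n / (2 * π) - (k n : ℝ)| ≤ 1 / 2 := abs_sub_round _
    have he : g n = (c n / (2 * π) - (k n : ℝ)) * (2 * π) := by
      rw [hg]; field_simp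
    rw [he, abs_mul, abs_of_pos hπ]
    calc |c n / (2 * π) - (k n : ℝ)| * (2 * π) ≤ (1 / 2) * (2 * π) :=
          mul_le_mul_of_nonneg_right h1 hπ.le
      _ = π := by ring
  have hcg : ∀ n, Real.cos (g n) = Real.cos (c n) := by
    intro n
    have he : g n = c n - (k n : ℝ) * (2 * π) := by rw [hg]; ring
    rw [he, Real.cos_sub_int_mul_two_pi]
  have hgt : Tendsto g atTop (nhds 0) := by
    rw [tendsto_zero_iff_abs_tendsto_zero]
    have h1 : Tendsto (fun n : ℤ => Real.arccos (Real.cos (c n))) atTop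
        (nhds (Real.arccos 1)) := (Real.continuous_arccos.tendsto 1).comp hcos
    rw [Real.arccos_one] at h1
    refine h1.congr fun n => ?_
    simp only [Function.comp_apply]
    rw [← hcg, ← Real.cos_abs, Real.arccos_cos (abs_nonneg _) (hgb n)]
  have hg1 : Tendsto (fun n : ℤ => g (n + 1)) atTop (nhds 0) :=
    hgt.comp (tendsto_atTop_add_const_right atTop 1 tendsto_id)
  have hkd : Tendsto (fun n : ℤ => ((k (n + 1) - k n : ℤ) : ℝ)) atTop (nhds 0) := by
    have h2 : Tendsto (fun n : ℤ => ((c (n + 1) - c n) - (g (n + 1) - g n)) / (2 * π))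
        atTop (nhds ((0 - (0 - 0)) / (2 * π))) := (hd.sub (hg1.sub hgt)).div_const _
    simp only [sub_zero, sub_self, zero_div] at h2
    refine h2.congr fun n => ?_
    have he : c (n + 1) - c n - (g (n + 1) - g n) = ((k (n + 1) - k n : ℤ) : ℝ) * (2 * π) := by
      rw [hg]; push_cast; ring
    rw [he, mul_div_cancel_right₀ _ hπ.ne']
  have hev : ∀ᶠ n : ℤ in atTop, k (n + 1) = k n := by
    have h3 : ∀ᶠ n : ℤ in atTop, ((k (n + 1) - k n : ℤ) : ℝ) ∈ Set.Ioo (-1 : ℝ) 1 :=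
      hkd.eventually (eventually_mem_set.mpr (Ioo_mem_nhds (by norm_num) (by norm_num)))
    refine h3.mono fun n hn => ?_
    have : k (n + 1) - k n = 0 := by
      have h4 : |((k (n + 1) - k n : ℤ) : ℝ)| < 1 := abs_lt.mpr ⟨hn.1, hn.2⟩
      exact_mod_cast by
        rw [← Int.cast_abs] at h4
        exact_mod_cast abs_eq_zero.mp (le_antisymm (by exact_mod_cast Int.lt_add_one_iff.mp (by exact_mod_cast h4)) (abs_nonneg _))
    omega
  obtain ⟨N, hN⟩ := eventually_atTop.mp hev
  have hconst : ∀ n, N ≤ n → k n = k N :=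
    Int.le_induction rfl (fun m hm ih => by rw [hN m hm]; exact ih)
  refine ⟨k N, ?_⟩
  have h5 : Tendsto (fun n : ℤ => 2 * π * (k N : ℝ) + g n) atTop (nhds (2 * π * (k N : ℝ) + 0)) :=
    tendsto_const_nhds.add hgt
  rw [add_zero] at h5
  have heq : 2 * (k N : ℝ) * π = 2 * π * (k N : ℝ) := by ring
  rw [heq]
  refine h5.congr' ?_
  filter_upwards [eventually_ge_atTop N] with n hn
  rw [hg]
  simp only [hconst n hn]
  ring

/-- For a solution of `Δ²y_{n-1} = A sin y_n` with finite action
`J(y) = Σ[½|Δy_n|² + A(1-cos y_n)] < ∞`, the differences `Δy_n → 0` as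
`n → ±∞`, the limits `y_{±∞}` exist, lie in `Θ = {2kπ : k ∈ ℤ}`, and
satisfy `sin(y_{±∞}) = 0`. -/
theorem finite_action_solution_limits (A : ℝ) (hA : 0 < A) (y : ℤ → ℝ)
    (hsol : ∀ n : ℤ, y (n + 1) - 2 * y n + y (n - 1) = A * Real.sin (y n))
    (hJ : Summable (fun n : ℤ =>
      (1 / 2) * (y (n + 1) - y n) ^ 2 + A * (1 - Real.cos (y n)))) :
    Tendsto (fun n : ℤ => y (n + 1) - y n) atTop (nhds 0) ∧
    Tendsto (fun n : ℤ => y (n + 1) - y n) atBot (nhds 0) ∧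
    (∃ Lp : ℝ, Tendsto y atTop (nhds Lp) ∧ (∃ k : ℤ, Lp = 2 * k * π) ∧
      Real.sin Lp = 0) ∧
    (∃ Lm : ℝ, Tendsto y atBot (nhds Lm) ∧ (∃ k : ℤ, Lm = 2 * k * π) ∧
      Real.sin Lm = 0) := by
  have hterm := hJ.tendsto_cofinite_zero
  have hleT : (atTop : Filter ℤ) ≤ cofinite := by rw [Int.cofinite_eq]; exact le_sup_right
  have hleB : (atBot : Filter ℤ) ≤ cofinite := by rw [Int.cofinite_eq]; exact le_sup_left
  obtain ⟨hdT, hcT⟩ := parts_aux A hA y atTop (hterm.mono_left hleT)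
  obtain ⟨hdB, hcB⟩ := parts_aux A hA y atBot (hterm.mono_left hleB)
  have hsin : ∀ k : ℤ, Real.sin (2 * (k : ℝ) * π) = 0 := by
    intro k
    rw [show (2 * (k : ℝ) * π) = ((2 * k : ℤ) : ℝ) * π by push_cast; ring]
    exact Real.sin_int_mul_pi _
  refine ⟨hdT, hdB, ?_, ?_⟩
  · obtain ⟨k, hk⟩ := conv_aux y hcT hdT
    exact ⟨2 * k * π, hk, ⟨k, rfl⟩, hsin k⟩
  · -- reduce atBot to atTop via z n = y (-n)
    set z : ℤ → ℝ := fun n => y (-n) with hz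
    have hnegTB : Tendsto (fun n : ℤ => -n) atTop atBot := tendsto_neg_atTop_atBot
    have hcz : Tendsto (fun n : ℤ => Real.cos (z n)) atTop (nhds 1) := hcB.comp hnegTB
    have hshift : Tendsto (fun n : ℤ => -n - 1) atTop atBot := by
      have := tendsto_atBot_add_const_right atBot (-1 : ℤ) (tendsto_id (α := ℤ))
      exact (this.comp hnegTB).congr fun n => by
        simp only [Function.comp_apply, id_eq]
        omega
    have hdz : Tendsto (fun n : ℤ => z (n + 1) - z n) atTop (nhds 0) := by
      have h6 : Tendsto (fun n : ℤ => -(y (-n - 1 + 1) - y (-n - 1))) atTop (nhds (-0)) :=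
        (hdB.comp hshift).neg
      rw [neg_zero] at h6
      refine h6.congr fun n => ?_
      show -(y (-n - 1 + 1) - y (-n - 1)) = y (-(n + 1)) - y (-n)
      rw [show (-n - 1 + 1 : ℤ) = -n by ring, show (-(n + 1) : ℤ) = -n - 1 by ring]
      ring
    obtain ⟨k, hk⟩ := conv_aux z hcz hdz
    refine ⟨2 * k * π, ?_, ⟨k, rfl⟩, hsin k⟩
    have h7 : Tendsto (fun n : ℤ => z (-n)) atBot (nhds (2 * k * π)) :=
      hk.comp tendsto_neg_atBot_atTop
    refine h7.congr fun n => by rw [hz]; simp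
end
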